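/- The map ι₃(u,v) = ( vb(v+u+1)(u+v)/(buv + bv² + au + vb), au(u+v)/(buv + bv² + au + vb) ) is an involution on the set where its denominator (before and after application) is nonzero. -/

import Mathlib

def Dden {K : Type*} [Field K] (a b u v : K) : K := b*u*v + b*v^2 + a*u + b*v

noncomputable def iota3 {K : Type*} [Field K] (a b : K) (p : K × K) : K × K :=
  (b * p.2 * (p.2 + p.1 + 1) * (p.1 + p.2) / Dden a b p.1 p.2,
   a * p.1 * (p.1 + p.2) / Dden a b p.1 p.2)

lemma E_aux {K : Type*} [Field K] (a b Nu Nv D : K) (hD : D ≠ 0) :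
    b * (Nu/D) * (Nv/D) + b * (Nv/D)^2 + a * (Nu/D) + b * (Nv/D)
      = (b*Nu*Nv + b*Nv^2 + a*Nu*D + b*Nv*D) / D^2 := by
  field_simp

/-- ι₃ is an involution where the denominator is nonzero before and after. -/
theorem iota3_involution {K : Type*} [Field K] (a b u v : K)
    (ha : a ≠ 0) (hb : b ≠ 0)
    (hD : Dden a b u v ≠ 0)
    (hD' : Dden a b (iota3 a b (u, v)).1 (iota3 a b (u, v)).2 ≠ 0) :
    iota3 a b (iota3 a b (u, v)) = (u, v) := by
  simp only [iota3, Dden] at hD hD' ⊢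
  have hE : b * (b * v * (v + u + 1) * (u + v) / (b*u*v + b*v^2 + a*u + b*v))
        * (a * u * (u + v) / (b*u*v + b*v^2 + a*u + b*v))
      + b * (a * u * (u + v) / (b*u*v + b*v^2 + a*u + b*v))^2
      + a * (b * v * (v + u + 1) * (u + v) / (b*u*v + b*v^2 + a*u + b*v))
      + b * (a * u * (u + v) / (b*u*v + b*v^2 + a*u + b*v))
      = a*b*(u+v)^2*(u+v+1) / (b*u*v + b*v^2 + a*u + b*v) := by
    rw [E_aux _ _ _ _ _ hD, div_eq_div_iff (pow_ne_zero 2 hD) hD]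
    ring
  rw [hE] at hD' ⊢
  have hs : u + v ≠ 0 := fun h => hD' (by rw [h]; simp)
  have ht : u + v + 1 ≠ 0 := fun h => hD' (by rw [show (u+v+1 : K) = 0 from h]; simp)
  have hsum : b * v * (v + u + 1) * (u + v) / (b*u*v + b*v^2 + a*u + b*v)
      + a * u * (u + v) / (b*u*v + b*v^2 + a*u + b*v) = u + v := by
    rw [← add_div,
      show b * v * (v + u + 1) * (u + v) + a * u * (u + v)
        = (u+v) * (b*u*v + b*v^2 + a*u + b*v) by ring,
      mul_div_assoc, div_self hD, mul_one]
  have hsum' : a * u * (u + v) / (b*u*v + b*v^2 + a*u + b*v)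
      + b * v * (v + u + 1) * (u + v) / (b*u*v + b*v^2 + a*u + b*v) = u + v := by
    rw [add_comm]; exact hsum
  have hW : a*b*(u+v)^2*(u+v+1) ≠ 0 :=
    mul_ne_zero (mul_ne_zero (mul_ne_zero ha hb) (pow_ne_zero 2 hs)) ht
  rw [Prod.mk.injEq]
  refine ⟨?_, ?_⟩
  · rw [hsum', hsum, div_div_eq_mul_div, div_eq_iff hW]
    linear_combination (b * (a * u * (u + v)) * (u + v + 1) * (u + v)) * mul_inv_cancel₀ hD
  · rw [hsum, div_div_eq_mul_div, div_eq_iff hW]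
    linear_combination (a * (b * v * (v + u + 1) * (u + v)) * (u + v)) * mul_inv_cancel₀ hD
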